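/- For a cyclic embedding ((a) ⊆ B) with height sequence (m_i) of a, the entry e of the associated LR-tableau occurs in row m_{e-1}+1. Equivalently, for each e and each m, the lengths of B/(p^{e-1}A + p^m B) and B/(p^e A + p^m B) agree if m ≤ m_{e-1} and differ otherwise. -/

import Mathlib

open Pointwise

/-- `b` lies in `p^m B`, i.e. the height of `b` is at least `m`. -/
def inPow {Λ B : Type} [CommRing Λ] [AddCommGroup B] [Module Λ B]
    (p : Λ) (m : ℕ) (b : B) : Prop := ∃ c, b = p ^ m • c

/-- The height of `b` is exactly `m`: `b ∈ p^m B \ p^{m+1} B`. -/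
def heightIs {Λ B : Type} [CommRing Λ] [AddCommGroup B] [Module Λ B]
    (p : Λ) (b : B) (m : ℕ) : Prop := inPow p m b ∧ ¬ inPow p (m + 1) b

section ChainBound

variable {R M : Type*} [Ring R] [AddCommGroup M] [Module R M]

lemma chain_le_bound (N : Submodule R M) (n : ℕ)
    (hn : ∀ q : LTSeries (Submodule R N), q.length ≤ n)
    (p : LTSeries (Submodule R M)) (hp : ∀ i, p i ≤ N) : p.length ≤ n := by
  let f : {P : Submodule R M // P ≤ N} ≃o Submodule R N := (Submodule.MapSubtype.orderIso N).symm
  have hsm : StrictMono fun i => f ⟨p i, hp i⟩ := fun i j hij =>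
    f.strictMono (Subtype.mk_lt_mk.mpr (p.strictMono hij))
  exact hn ⟨p.length, fun i => f ⟨p i, hp i⟩, fun i => hsm (Fin.castSucc_lt_succ (i := i))⟩

lemma exists_chain_bound (h : IsFiniteLength R M) :
    ∃ n : ℕ, ∀ p : LTSeries (Submodule R M), p.length ≤ n := by
  induction h with
  | of_subsingleton =>
      refine ⟨0, fun p => ?_⟩
      by_contra hc
      exact absurd (Subsingleton.elim _ _) (show p.toFun _ < p.toFun _ from p.step ⟨0, by omega⟩).ne
  | @of_simple_quotient M _ _ N _ h ih =>
      obtain ⟨n, hn⟩ := ih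
      refine ⟨n + 1, fun p => ?_⟩
      have hNP : ∀ P : Submodule R M, N ≤ P → P = N ∨ P = ⊤ := by
        intro P hP
        rcases eq_bot_or_eq_top (Submodule.map N.mkQ P) with h0 | h1
        · left
          have hcm := Submodule.comap_map_mkQ N P
          rw [h0, Submodule.comap_bot, Submodule.ker_mkQ] at hcm
          exact le_antisymm (by rw [hcm]; exact le_sup_right) hP
        · right
          have hcm := Submodule.comap_map_mkQ N P
          rw [h1, Submodule.comap_top, sup_eq_right.mpr hP] at hcm
          exact hcm.symm
      have hsup : ∀ P : Submodule R M, ¬ P ≤ N → P ⊔ N = ⊤ := by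
        intro P hP
        rcases hNP (P ⊔ N) le_sup_right with h0 | h1
        · exact absurd (le_sup_left.trans h0.le) hP
        · exact h1
      by_cases hall : ∀ i, p i ≤ N
      · exact le_trans (chain_le_bound N n hn p hall) (Nat.le_succ n)
      by_cases hnone : ∀ i, ¬ p i ≤ N
      · refine le_trans (chain_le_bound N n hn
          ⟨p.length, fun i => p i ⊓ N, fun i => ?_⟩ (fun i => inf_le_right)) (Nat.le_succ n)
        exact inf_lt_inf_of_lt_of_sup_le_sup (p.step i)
          (le_of_eq ((hsup _ (hnone _)).trans (hsup _ (hnone _)).symm))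
      push_neg at hall hnone
      obtain ⟨i₁, hi₁⟩ := hall
      obtain ⟨i₀, hi₀⟩ := hnone
      let S : Set ℕ := {k | ∃ hk : k < p.length + 1, p ⟨k, hk⟩ ≤ N}
      have hSne : S.Nonempty := ⟨(i₀ : ℕ), i₀.isLt, by simpa using hi₀⟩
      have hSbd : BddAbove S := ⟨p.length, fun k hk => by obtain ⟨h1, -⟩ := hk; omega⟩
      obtain ⟨hj_lt, hjN⟩ := Nat.sSup_mem hSne hSbd
      have hmax : ∀ k (hk : k < p.length + 1), sSup S < k → ¬ p ⟨k, hk⟩ ≤ N := by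
        intro k hk hjk hPk
        have : k ≤ sSup S := le_csSup hSbd ⟨hk, hPk⟩
        omega
      have hjL : sSup S < p.length := by
        by_contra h'
        apply hi₁
        have h1 : i₁ ≤ (⟨sSup S, hj_lt⟩ : Fin (p.length + 1)) := by
          rw [Fin.le_def]
          have := i₁.isLt
          simp only [Fin.val_mk] at *
          omega
        exact le_trans (p.monotone h1) hjN
      -- build the spliced chain of length p.length - 1 inside N
      let d : Fin (p.length - 1 + 1) → Submodule R M := fun k =>
        if (k : ℕ) < sSup S then p ⟨(k : ℕ), by have := k.isLt; omega⟩
        else p ⟨(k : ℕ) + 1, by have := k.isLt; omega⟩ ⊓ N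
      have hdle : ∀ k, d k ≤ N := by
        intro k
        dsimp only [d]
        split_ifs with hk
        · exact le_trans (p.monotone (Fin.mk_le_mk.mpr hk.le)) hjN
        · exact inf_le_right
      have hdstep : ∀ k : Fin (p.length - 1), d k.castSucc < d k.succ := by
        intro k
        have hkL : (k : ℕ) < p.length - 1 := k.isLt
        dsimp only [d]
        simp only [Fin.coe_castSucc, Fin.val_succ]
        split_ifs with h1 h2 h2
        · exact p.strictMono (Fin.mk_lt_mk.mpr (by omega))
        · -- k < sSup S, ¬ k+1 < sSup S, so sSup S = k + 1
          have hj : sSup S = (k : ℕ) + 1 := by omega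
          have hmid : p ⟨(k : ℕ), by omega⟩ < p ⟨(k : ℕ) + 1, by omega⟩ :=
            p.strictMono (Fin.mk_lt_mk.mpr (by omega))
          refine lt_of_lt_of_le hmid ?_
          refine le_inf (p.monotone (Fin.mk_le_mk.mpr (by omega))) ?_
          have hfin : (⟨(k : ℕ) + 1, by omega⟩ : Fin (p.length + 1)) = ⟨sSup S, hj_lt⟩ := by
            apply Fin.ext
            simp only [Fin.val_mk]
            omega
          rw [hfin]
          exact hjN
        · omega
        · -- sSup S ≤ k
          refine inf_lt_inf_of_lt_of_sup_le_sup
            (p.strictMono (Fin.mk_lt_mk.mpr (by omega))) (le_of_eq ?_)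
          rw [hsup _ (hmax _ _ (by omega)), hsup _ (hmax _ _ (by omega))]
      have := chain_le_bound N n hn ⟨p.length - 1, d, hdstep⟩ hdle
      simp only [RelSeries.length] at this ⊢
      omega

end ChainBound

section Artinian

lemma isArtinian_of_surj_algebraMap {R S M : Type*} [CommRing R] [Ring S] [Algebra R S]
    (hs : Function.Surjective (algebraMap R S)) [AddCommGroup M] [Module R M] [Module S M]
    [IsScalarTower R S M] [IsArtinian S M] : IsArtinian R M := by
  let g : Submodule R M → Submodule S M := fun W =>
    { carrier := W
      add_mem' := fun ha hb => W.add_mem ha hb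
      zero_mem' := W.zero_mem
      smul_mem' := by
        intro s x hx
        obtain ⟨r, rfl⟩ := hs s
        rw [algebraMap_smul]
        exact W.smul_mem r hx }
  have hg : StrictMono g := by
    intro W W' hWW'
    refine lt_of_le_of_ne (fun x hx => hWW'.le hx) (fun hEq => hWW'.ne ?_)
    ext x
    exact ⟨fun hx => by have : x ∈ g W' := hEq ▸ hx; exact this,
           fun hx => by have : x ∈ g W := hEq ▸ hx; exact this⟩
  exact ⟨hg.wellFoundedLT.wf⟩

lemma art_aux (Λ : Type) [CommRing Λ] [IsDomain Λ] [IsDiscreteValuationRing Λ]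
    (p : Λ) (hp : Irreducible p) :
    ∀ (n : ℕ) (M : Type) [AddCommGroup M] [Module Λ M], Module.Finite Λ M →
      (∀ x : M, p ^ n • x = 0) → IsArtinian Λ M := by
  intro n
  induction n with
  | zero =>
      intro M _ _ _ hkill
      have : Subsingleton M := ⟨fun a b => by
        have ha := hkill a; have hb := hkill b
        rw [pow_zero, one_smul] at ha hb
        rw [ha, hb]⟩
      infer_instance
  | succ n ih =>
      intro M _ _ hfin hkill
      set N : Submodule Λ M := Ideal.span {p} • ⊤ with hNdef
      have hNoe : IsNoetherian Λ M := inferInstance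
      have hNfg : Module.Finite Λ N := Module.Finite.iff_fg.mpr (IsNoetherian.noetherian N)
      have hNkill : ∀ x : N, p ^ n • x = 0 := by
        rintro ⟨x, hx⟩
        rw [hNdef, Submodule.ideal_span_singleton_smul] at hx
        obtain ⟨y, -, rfl⟩ := Set.mem_smul_set.mp hx
        have : p ^ n • (p • y) = 0 := by
          rw [smul_smul, ← pow_succ]
          exact hkill y
        exact Subtype.ext (by simpa using this)
      have hN : IsArtinian Λ N := ih N hNfg hNkill
      have hQtorBy : Module.IsTorsionBy Λ (M ⧸ N) p := by
        intro x
        obtain ⟨y, rfl⟩ := N.mkQ_surjective x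
        rw [← map_smul]
        rw [Submodule.mkQ_apply, Submodule.Quotient.mk_eq_zero]
        exact Submodule.smul_mem_smul (Ideal.mem_span_singleton_self p) trivial
      have hQtor : Module.IsTorsionBySet Λ (M ⧸ N) (Ideal.span {p} : Ideal Λ) := by
        rw [← Ideal.submodule_span_eq]
        exact (Module.isTorsionBySet_span_singleton_iff p).mpr hQtorBy
      letI : Module (Λ ⧸ Ideal.span {p}) (M ⧸ N) := hQtor.module
      haveI : IsScalarTower Λ (Λ ⧸ Ideal.span {p}) (M ⧸ N) := hQtor.isScalarTower
      haveI : (Ideal.span {p} : Ideal Λ).IsMaximal :=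
        PrincipalIdealRing.isMaximal_of_irreducible hp
      letI : Field (Λ ⧸ Ideal.span {p}) := Ideal.Quotient.field _
      haveI : Module.Finite (Λ ⧸ Ideal.span {p}) (M ⧸ N) :=
        Module.Finite.of_restrictScalars_finite Λ _ _
      haveI : IsArtinian (Λ ⧸ Ideal.span {p}) (M ⧸ N) := isArtinian_of_fg_of_artinian'
      have hQ : IsArtinian Λ (M ⧸ N) :=
        isArtinian_of_surj_algebraMap (R := Λ) (S := Λ ⧸ Ideal.span {p}) (M := M ⧸ N)
          (by rw [Ideal.Quotient.algebraMap_eq]; exact Ideal.Quotient.mk_surjective)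
      exact (isArtinian_iff_submodule_quotient N).mpr ⟨hN, hQ⟩

lemma kill_bound (Λ : Type) [CommRing Λ] [IsDomain Λ] [IsDiscreteValuationRing Λ]
    (p : Λ) (hp : Irreducible p)
    (B : Type) [AddCommGroup B] [Module Λ B] [Module.Finite Λ B]
    (htor : Module.IsTorsion Λ B) : ∃ n, ∀ x : B, p ^ n • x = 0 := by
  have hx : ∀ x : B, ∃ n : ℕ, p ^ n • x = 0 := by
    intro x
    obtain ⟨c, hcx⟩ := @htor x
    obtain ⟨k, u, hu⟩ := IsDiscreteValuationRing.eq_unit_mul_pow_irreducible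
      (mem_nonZeroDivisors_iff_ne_zero.mp c.2) hp
    refine ⟨k, ?_⟩
    have : ((u : Λ) * p ^ k) • x = 0 := by
      rw [← hu]
      rw [Submonoid.smul_def] at hcx
      exact hcx
    rw [mul_smul] at this
    calc p ^ k • x = (u⁻¹ : Λˣ) • ((u : Λ) • p ^ k • x) := by
            rw [smul_smul, Units.smul_def, smul_smul, ← mul_assoc, Units.inv_mul, one_mul]
      _ = 0 := by rw [this, smul_zero]
  choose f hf using hx
  obtain ⟨s, hs⟩ := Module.Finite.fg_top (R := Λ) (M := B)
  refine ⟨s.sup f, fun x => ?_⟩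
  have hker : (⊤ : Submodule Λ B) ≤ LinearMap.ker (LinearMap.lsmul Λ B (p ^ s.sup f)) := by
    rw [← hs, Submodule.span_le]
    intro y hy
    simp only [SetLike.mem_coe, LinearMap.mem_ker, LinearMap.lsmul_apply]
    have hle : f y ≤ s.sup f := Finset.le_sup hy
    calc p ^ s.sup f • y = p ^ (s.sup f - f y) • (p ^ f y • y) := by
          rw [smul_smul, ← pow_add, Nat.sub_add_cancel hle]
      _ = 0 := by rw [hf y, smul_zero]
  simpa using hker (Submodule.mem_top : x ∈ ⊤)

end Artinian

lemma fdo_of_bound {α : Type*} [Preorder α] [Nonempty α] (n : ℕ)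
    (h : ∀ p : LTSeries α, p.length ≤ n) : FiniteDimensionalOrder α := by
  let S : Set ℕ := Set.range (fun p : LTSeries α => p.length)
  have hne : S.Nonempty := ⟨0, ⟨RelSeries.singleton _ (Classical.arbitrary α), rfl⟩⟩
  have hbdd : BddAbove S := ⟨n, by rintro _ ⟨p, rfl⟩; exact h p⟩
  obtain ⟨p, hp⟩ := Nat.sSup_mem hne hbdd
  have hp' : p.length = sSup S := hp
  exact ⟨⟨p, fun q => by rw [hp']; exact le_csSup hbdd ⟨q, rfl⟩⟩⟩

lemma krullDim_ne_of_lt (Λ : Type) [CommRing Λ] [IsDomain Λ] [IsDiscreteValuationRing Λ]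
    (p : Λ) (hp : Irreducible p)
    (B : Type) [AddCommGroup B] [Module Λ B] [Module.Finite Λ B]
    (htor : Module.IsTorsion Λ B) (N1 N2 : Submodule Λ B) (hlt : N2 < N1) :
    Order.krullDim (Submodule Λ (B ⧸ N1)) ≠ Order.krullDim (Submodule Λ (B ⧸ N2)) := by
    -- finite length of B
    obtain ⟨nk, hnk⟩ := kill_bound Λ p hp B htor
    haveI hart : IsArtinian Λ B := art_aux Λ p hp nk B inferInstance hnk
    haveI hnoe : IsNoetherian Λ B := inferInstance
    have hFL : IsFiniteLength Λ B := isFiniteLength_iff_isNoetherian_isArtinian.mpr ⟨hnoe, hart⟩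
    obtain ⟨n, hn⟩ := exists_chain_bound hFL
    have hbound : ∀ (N : Submodule Λ B) (q : LTSeries (Submodule Λ (B ⧸ N))), q.length ≤ n := by
      intro N q
      exact hn (q.map (Submodule.comapMkQOrderEmbedding N) (Submodule.comapMkQOrderEmbedding N).strictMono)
    haveI fdo1 : FiniteDimensionalOrder (Submodule Λ (B ⧸ N1)) := fdo_of_bound n (hbound N1)
    haveI fdo2 : FiniteDimensionalOrder (Submodule Λ (B ⧸ N2)) := fdo_of_bound n (hbound N2)
    rw [Order.krullDim_eq_length_of_finiteDimensionalOrder,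
        Order.krullDim_eq_length_of_finiteDimensionalOrder]
    intro hEq
    -- construct the strictly monotone map and derive a contradiction
    have hcast : (LTSeries.longestOf (Submodule Λ (B ⧸ N1))).length
        = (LTSeries.longestOf (Submodule Λ (B ⧸ N2))).length := by exact_mod_cast hEq
    let g1 := Submodule.comapMkQRelIso N1
    let g2 := Submodule.comapMkQRelIso N2
    let ι : {P : Submodule Λ B // N1 ≤ P} → {P : Submodule Λ B // N2 ≤ P} :=
      fun P => ⟨P.1, le_trans hlt.le P.2⟩
    have hι : StrictMono ι := fun P Q h => Subtype.mk_lt_mk.mpr (Subtype.coe_lt_coe.mpr h)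
    let f : Submodule Λ (B ⧸ N1) → Submodule Λ (B ⧸ N2) := fun Q => g2.symm (ι (g1 Q))
    have hf : StrictMono f := g2.symm.strictMono.comp (hι.comp g1.strictMono)
    have hbot : ∀ Q, (⊥ : Submodule Λ (B ⧸ N2)) < f Q := by
      intro Q
      rw [← g2.lt_iff_lt]
      have hg2f : g2 (f Q) = ι (g1 Q) := g2.apply_symm_apply _
      have hg2bot : g2 (⊥ : Submodule Λ (B ⧸ N2)) = ⟨N2, Set.mem_Ici.mpr le_rfl⟩ := by
        apply Subtype.ext
        show Submodule.comap N2.mkQ ⊥ = N2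
        rw [Submodule.comap_bot, Submodule.ker_mkQ]
      rw [hg2f, hg2bot]
      exact Subtype.mk_lt_mk.mpr (lt_of_lt_of_le hlt (g1 Q).2)
    let q := LTSeries.longestOf (Submodule Λ (B ⧸ N1))
    let q' : LTSeries (Submodule Λ (B ⧸ N2)) := (q.map f hf).cons ⊥ (hbot _)
    have hq' : q'.length = q.length + 1 := by
      show ((q.map f hf).cons ⊥ _).length = q.length + 1
      refine (RelSeries.cons_length ..).trans ?_
      rfl
    have hlong := LTSeries.longestOf_is_longest q'
    rw [hq'] at hlong
    have hql : q.length = (LTSeries.longestOf (Submodule Λ (B ⧸ N1))).length := rfl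
    omega

theorem stmt8 (Λ : Type) [CommRing Λ] [IsDomain Λ] [IsDiscreteValuationRing Λ]
    (p : Λ) (hp : Irreducible p)
    (B : Type) [AddCommGroup B] [Module Λ B] [Module.Finite Λ B]
    (htor : Module.IsTorsion Λ B)
    (a : B) (r : ℕ) (m : ℕ → ℕ) (hr : p ^ r • a = 0)
    (hgt : ∀ i < r, heightIs p (p ^ i • a) (m i)) :
    ∀ e mm : ℕ, e < r →
      (Order.krullDim (Submodule Λ (B ⧸ (Ideal.span {p ^ e} • Submodule.span Λ {a}
            ⊔ Ideal.span {p ^ mm} • (⊤ : Submodule Λ B)))) =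
        Order.krullDim (Submodule Λ (B ⧸ (Ideal.span {p ^ (e + 1)} • Submodule.span Λ {a}
            ⊔ Ideal.span {p ^ mm} • (⊤ : Submodule Λ B)))) ↔ mm ≤ m e) := by
  intro e mm he
  have hsing : ∀ k : ℕ, (Ideal.span {p ^ k} : Ideal Λ) • Submodule.span Λ {a}
      = Submodule.span Λ {p ^ k • a} := by
    intro k
    rw [Submodule.ideal_span_singleton_smul, Submodule.smul_span, Set.smul_set_singleton]
  obtain ⟨⟨c, hc⟩, hnot⟩ := hgt e he
  by_cases hm : mm ≤ m e
  · -- both submodules are equal to p^mm B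
    have h1 : Submodule.span Λ {p ^ e • a} ≤ Ideal.span {p ^ mm} • (⊤ : Submodule Λ B) := by
      rw [Submodule.span_le, Set.singleton_subset_iff]
      have hde : p ^ e • a = p ^ mm • (p ^ (m e - mm) • c) := by
        rw [hc, smul_smul, ← pow_add, Nat.add_sub_cancel' hm]
      rw [SetLike.mem_coe, hde]
      exact Submodule.smul_mem_smul (Ideal.mem_span_singleton_self _) trivial
    have h2 : Submodule.span Λ {p ^ (e + 1) • a} ≤ Ideal.span {p ^ mm} • (⊤ : Submodule Λ B) := by
      rw [Submodule.span_le, Set.singleton_subset_iff]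
      have hde : p ^ (e + 1) • a = p • (p ^ e • a) := by
        rw [smul_smul, ← pow_succ']
      rw [SetLike.mem_coe, hde]
      exact Submodule.smul_mem _ p (h1 (Submodule.mem_span_singleton_self _))
    have hEq : (Ideal.span {p ^ e} • Submodule.span Λ {a}
          ⊔ Ideal.span {p ^ mm} • (⊤ : Submodule Λ B))
        = (Ideal.span {p ^ (e + 1)} • Submodule.span Λ {a}
          ⊔ Ideal.span {p ^ mm} • (⊤ : Submodule Λ B)) := by
      rw [hsing, hsing, sup_eq_right.mpr h1, sup_eq_right.mpr h2]
    rw [hEq]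
    exact iff_of_true rfl hm
  · -- strict inclusion case
    set N1 : Submodule Λ B := Ideal.span {p ^ e} • Submodule.span Λ {a}
        ⊔ Ideal.span {p ^ mm} • (⊤ : Submodule Λ B) with hN1def
    set N2 : Submodule Λ B := Ideal.span {p ^ (e + 1)} • Submodule.span Λ {a}
        ⊔ Ideal.span {p ^ mm} • (⊤ : Submodule Λ B) with hN2def
    have hmem1 : p ^ e • a ∈ N1 := by
      rw [hN1def, hsing]
      exact Submodule.mem_sup_left (Submodule.mem_span_singleton_self _)
    have hnmem2 : p ^ e • a ∉ N2 := by
      intro hmem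
      rw [hN2def, hsing] at hmem
      obtain ⟨y, hy, z, hz, hyz⟩ := Submodule.mem_sup.mp hmem
      obtain ⟨lam, rfl⟩ := Submodule.mem_span_singleton.mp hy
      rw [Submodule.ideal_span_singleton_smul] at hz
      obtain ⟨w, -, rfl⟩ := Set.mem_smul_set.mp hz
      have hu : IsUnit (1 - lam * p) := by
        rcases IsLocalRing.isUnit_or_isUnit_one_sub_self (lam * p) with h | h
        · exact absurd (isUnit_of_mul_isUnit_right h) hp.not_isUnit
        · exact h
      obtain ⟨u, hu⟩ := hu
      have key : (1 - lam * p) • (p ^ e • a) = p ^ mm • w := by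
        have h1 : lam • (p ^ (e + 1) • a) = (lam * p) • (p ^ e • a) := by
          have hmul : lam * p ^ (e + 1) = lam * p * p ^ e := by ring
          rw [smul_smul, smul_smul, hmul]
        rw [sub_smul, one_smul]
        rw [h1] at hyz
        exact (eq_sub_of_add_eq' hyz).symm
      apply hnot
      refine ⟨p ^ (mm - (m e + 1)) • ((u⁻¹ : Λˣ) • w), ?_⟩
      calc p ^ e • a = (u⁻¹ : Λˣ) • ((u : Λ) • (p ^ e • a)) := by
              rw [Units.smul_def, smul_smul, Units.inv_mul, one_smul]
        _ = (u⁻¹ : Λˣ) • (p ^ mm • w) := by rw [hu, key]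
        _ = p ^ mm • ((u⁻¹ : Λˣ) • w) := by rw [smul_comm]
        _ = p ^ (m e + 1) • (p ^ (mm - (m e + 1)) • ((u⁻¹ : Λˣ) • w)) := by
              rw [smul_smul (p ^ (m e + 1)), ← pow_add,
                Nat.add_sub_cancel' (by omega : m e + 1 ≤ mm)]
    have hle : N2 ≤ N1 := by
      rw [hN1def, hN2def, hsing, hsing]
      refine sup_le_sup_right ?_ _
      rw [Submodule.span_le, Set.singleton_subset_iff]
      have hde : p ^ (e + 1) • a = p • (p ^ e • a) := by rw [smul_smul, ← pow_succ']
      rw [SetLike.mem_coe, hde]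
      exact Submodule.smul_mem _ p (Submodule.mem_span_singleton_self _)
    have hlt : N2 < N1 := lt_of_le_of_ne hle (fun hEq => hnmem2 (hEq ▸ hmem1))
    exact iff_of_false (krullDim_ne_of_lt Λ p hp B htor N1 N2 hlt) hm
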